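/- For any DAG G, the undirected graph whose edge set is {{u,v} : u→v is a covered edge of G} (the skeleton of the edge-induced subgraph on the covered edges C(G)) is a forest, i.e., it contains no cycles. -/
import Mathlib


/-- A directed graph (given by its edge relation) is a DAG if it has no directed cycles. -/
def IsDAG {V : Type*} (E : V → V → Prop) : Prop :=
  ∀ v : V, ¬ Relation.TransGen E v v

/-- The set of parents of `v` in the directed graph `E`. -/
def parents {V : Type*} (E : V → V → Prop) (v : V) : Set V := {u | E u v}

/-- An arc `x → y` of `E` is a covered edge if `Pa(x) = Pa(y) \ {x}`. -/
def CoveredEdge {V : Type*} (E : V → V → Prop) (x y : V) : Prop :=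
  E x y ∧ parents E x = parents E y \ {x}

/-- The set of covered edges of `E`, as ordered pairs. -/
def coveredEdges {V : Type*} (E : V → V → Prop) : Set (V × V) :=
  {p | CoveredEdge E p.1 p.2}

/-- The skeleton (undirected adjacency) of a directed graph. -/
def Skel {V : Type*} (E : V → V → Prop) (u v : V) : Prop := E u v ∨ E v u

/-- `(u, v, w)` is a v-structure: `u → v ← w` with `u ≠ w` non-adjacent. -/
def VStruct {V : Type*} (E : V → V → Prop) (u v w : V) : Prop :=
  u ≠ w ∧ E u v ∧ E w v ∧ ¬ Skel E u w

/-- Two directed graphs are Markov equivalent: same skeleton and same v-structures. -/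
def MarkovEquiv {V : Type*} (E E' : V → V → Prop) : Prop :=
  (∀ u v, Skel E u v ↔ Skel E' u v) ∧ (∀ u v w, VStruct E u v w ↔ VStruct E' u v w)

/-- Minimum vertex cover number of a set of (directed) edges. -/
noncomputable def mvc {V : Type*} [Fintype V] (F : Set (V × V)) : ℕ :=
  sInf {n | ∃ S : Finset V, (∀ p ∈ F, p.1 ∈ S ∨ p.2 ∈ S) ∧ S.card = n}

/-- The graph obtained from `E` by reversing the arc `x → y` to `y → x`. -/
def reverseEdge {V : Type*} (E : V → V → Prop) (x y : V) : V → V → Prop :=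
  fun u v => (E u v ∧ ¬(u = x ∧ v = y)) ∨ (u = y ∧ v = x)

/-- A moral DAG is a DAG with no v-structures. -/
def Moral {V : Type*} (E : V → V → Prop) : Prop := ∀ u v w, ¬ VStruct E u v w

/-- `w` is a direct child of `v`: `v → w` is an arc and there is no directed
path from `v` to `w` of length at least 2 (i.e. through an intermediate vertex). -/
def DirectChild {V : Type*} (E : V → V → Prop) (v w : V) : Prop :=
  E v w ∧ ∀ z : V, ¬ (Relation.TransGen E v z ∧ Relation.TransGen E z w)

section AuxCovered

variable {V : Type*} {E : V → V → Prop}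

private lemma IsDAG.no_self (hE : IsDAG E) (x : V) : ¬ E x x :=
  fun h => hE x (Relation.TransGen.single h)

/-- Two covered edges with the same head have the same tail. -/
private lemma covered_head_inj (hE : IsDAG E) {x z y : V}
    (hx : CoveredEdge E x y) (hz : CoveredEdge E z y) : x = z := by
  by_contra hne
  have hxz : E x z := by
    have : x ∈ parents E z := by
      rw [hz.2]; exact ⟨hx.1, by simpa using hne⟩
    exact this
  have hzx : E z x := by
    have : z ∈ parents E x := by
      rw [hx.2]; exact ⟨hz.1, by simpa using fun h : z = x => hne h.symm⟩
    exact this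
  exact hE x (Relation.TransGen.head hxz (Relation.TransGen.single hzx))

private lemma walk_propagate (hE : IsDAG E) {t x : V}
    (p : (SimpleGraph.fromRel (fun u v => CoveredEdge E u v)).Walk x t)
    (hnd : p.support.Nodup) {y : V} (hy : CoveredEdge E y x)
    (hmem : y ∉ p.support ∨ (y = t ∧ 2 ≤ p.length)) :
    Relation.TransGen E x t ∨ x = t := by
  induction p generalizing y with
  | nil => exact Or.inr rfl
  | @cons a b t hadj p ih =>
    have hadj' := (SimpleGraph.fromRel_adj _ _ _).mp hadj
    simp only [SimpleGraph.Walk.support_cons, List.nodup_cons] at hnd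
    rcases hadj'.2 with hab | hba
    · -- forward edge a → b
      rcases ih hnd.2 hab (Or.inl hnd.1) with h | h
      · exact Or.inl (Relation.TransGen.head hab.1 h)
      · exact Or.inl (h ▸ Relation.TransGen.single hab.1)
    · -- backward edge b → a : head injectivity forces b = y
      have hby : b = y := covered_head_inj hE hba hy
      rcases hmem with hmem | ⟨hyt, hlen⟩
      · exact absurd (by
          rw [SimpleGraph.Walk.support_cons]
          exact List.mem_cons_of_mem _ (hby ▸ p.start_mem_support) : y ∈ (SimpleGraph.Walk.cons hadj p).support) hmem
      · -- then b = t, so p : Walk t t with nodup support, so p = nil, length too small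
        subst hby; subst hyt
        cases p with
        | nil => simp at hlen
        | cons h' p' =>
          simp only [SimpleGraph.Walk.support_cons, List.nodup_cons] at hnd
          exact absurd (p'.end_mem_support) hnd.2.1

end AuxCovered

/-- For any DAG, the undirected graph on the covered edges (the skeleton of the
edge-induced subgraph on `C(G)`) is a forest: it contains no cycles. -/
theorem coveredEdges_skeleton_isAcyclic
    {V : Type*} (E : V → V → Prop) (hE : IsDAG E) :
    (SimpleGraph.fromRel (fun u v => CoveredEdge E u v)).IsAcyclic := by
  intro v c hc
  cases c with
  | nil => exact hc.ne_nil rfl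
  | @cons _ b _ hadj q =>
    have hnd : q.support.Nodup := by
      have := hc.2
      simpa using this
    have hlen : 2 ≤ q.length := by
      have := hc.three_le_length
      simp only [SimpleGraph.Walk.length_cons] at this
      omega
    have hne : v ≠ b := (SimpleGraph.fromRel_adj _ _ _ |>.mp hadj).1
    rcases (SimpleGraph.fromRel_adj _ _ _ |>.mp hadj).2 with hvb | hbv
    · rcases walk_propagate hE q hnd hvb (Or.inr ⟨rfl, hlen⟩) with h | h
      · exact hE v (Relation.TransGen.head hvb.1 h)
      · exact hne h.symm
    · rcases walk_propagate hE q.reverse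
        (by rw [SimpleGraph.Walk.support_reverse]; exact List.nodup_reverse.mpr hnd) hbv
        (Or.inr ⟨rfl, by rwa [SimpleGraph.Walk.length_reverse]⟩) with h | h
      · exact hE b (Relation.TransGen.head hbv.1 h)
      · exact hne h
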